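/- Let S and B be F-algebras, A = S ⊗ B, and L a Lie ideal of A. Suppose every element of B is a sum of commutators. Then M = {m ∈ S : m ⊗ b ∈ L for all b ∈ B} satisfies m² ∈ M for every m ∈ M. -/

import Mathlib

open scoped TensorProduct

theorem stmt15 {F S B : Type*} [Field F] [Ring S] [Algebra F S] [Ring B] [Algebra F B]
    (L : Submodule F (S ⊗[F] B))
    (hL : ∀ x ∈ L, ∀ a : S ⊗[F] B, x * a - a * x ∈ L)
    (hcomm : ∀ b : B, b ∈ AddSubgroup.closure {x : B | ∃ u v : B, x = u * v - v * u})
    (m : S) (hm : ∀ b : B, m ⊗ₜ[F] b ∈ L) :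
    ∀ b : B, (m ^ 2) ⊗ₜ[F] b ∈ L := by
  intro b
  have := hcomm b
  induction this using AddSubgroup.closure_induction with
  | mem x hx =>
    obtain ⟨u, v, rfl⟩ := hx
    have key : (m ^ 2) ⊗ₜ[F] (u * v - v * u)
        = (m ⊗ₜ[F] u) * (m ⊗ₜ[F] v) - (m ⊗ₜ[F] v) * (m ⊗ₜ[F] u) := by
      simp [Algebra.TensorProduct.tmul_mul_tmul, TensorProduct.tmul_sub, pow_two]
    rw [key]
    exact hL _ (hm u) _
  | zero => simpa using L.zero_mem
  | add x y _ _ hx hy => simpa [TensorProduct.tmul_add] using L.add_mem hx hy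
  | neg x _ hx => simpa [TensorProduct.tmul_neg] using L.neg_mem hx
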